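/- arXiv:1611.02838 — 2 statements merged into one kernel-verified Lean document; each statement's English description precedes it below -/
import Mathlib

section
/- Let p, q be natural numbers with p > q ≥ 1. Then for every natural number n ≥ 1, C(pn, qn)^{1/(qn)} < (p/q)·(p/(p−q))^{(p−q)/q}; equivalently, C(pn, qn) < (p/q)^{qn}·(p/(p−q))^{(p−q)n}. -/
/-- **Lemma (binomial coefficient estimate).** Let `p > q ≥ 1` be natural numbers.  Then
for every natural number `n ≥ 1`,
`C(pn, qn)^{1/(qn)} < (p/q)·(p/(p−q))^{(p−q)/q}`; equivalently,
`C(pn, qn) < (p/q)^{qn}·(p/(p−q))^{(p−q)n}`. -/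
theorem statement9 (p q n : ℕ) (hq : 1 ≤ q) (hpq : q < p) (hn : 1 ≤ n) :
    ((Nat.choose (p * n) (q * n) : ℝ)) ^ ((1 : ℝ) / ((q : ℝ) * (n : ℝ))) <
      ((p : ℝ) / (q : ℝ)) * (((p : ℝ) / ((p : ℝ) - (q : ℝ))) ^ (((p : ℝ) - (q : ℝ)) / (q : ℝ))) ∧
    (Nat.choose (p * n) (q * n) : ℝ) <
      ((p : ℝ) / (q : ℝ)) ^ (q * n) * ((p : ℝ) / ((p : ℝ) - (q : ℝ))) ^ ((p - q) * n) := by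
  have hqR : (0:ℝ) < q := by exact_mod_cast hq
  have hnR : (0:ℝ) < n := by exact_mod_cast hn
  have hpR : (0:ℝ) < p := by exact_mod_cast (hq.trans hpq.le)
  have hqpR : (q:ℝ) < p := by exact_mod_cast hpq
  have hdR : (0:ℝ) < (p:ℝ) - q := by linarith
  have hsplit : q * n + (p - q) * n = p * n := by
    rw [← Nat.add_mul, Nat.add_sub_cancel' hpq.le]
  -- key nat inequality via binomial theorem
  have key : Nat.choose (p*n) (q*n) * (q ^ (q*n) * (p-q) ^ ((p-q)*n)) < p ^ (p*n) := by
    have hpn : p = q + (p - q) := by omega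
    have hb : p ^ (p*n) = (q + (p - q)) ^ (p*n) := by rw [← hpn]
    have hsum : p ^ (p*n) = ∑ k ∈ Finset.range (p*n + 1),
        q ^ k * (p-q) ^ (p*n - k) * Nat.choose (p*n) k := by
      rw [hb, add_pow]; simp [← hpn]
    rw [hsum]
    have hlt : q ^ (q*n) * (p-q) ^ (p*n - q*n) * Nat.choose (p*n) (q*n) <
        ∑ k ∈ Finset.range (p*n + 1),
          q ^ k * (p-q) ^ (p*n - k) * Nat.choose (p*n) k := by
      apply Finset.single_lt_sum (i := q*n) (j := 0)
        (f := fun k => q ^ k * (p-q) ^ (p*n - k) * Nat.choose (p*n) k)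
      · exact (Nat.mul_pos hq hn).ne
      · apply Finset.mem_range.2; nlinarith [Nat.mul_le_mul_right n hpq.le]
      · simp
      · have : 0 < p - q := by omega
        have : 0 < (p-q) ^ (p*n - 0) := Nat.pow_pos this
        simpa using this
      · intro k _ _; exact Nat.zero_le _
    have hrw : p*n - q*n = (p-q)*n := by omega
    calc Nat.choose (p*n) (q*n) * (q ^ (q*n) * (p-q) ^ ((p-q)*n))
        = q ^ (q*n) * (p-q) ^ (p*n - q*n) * Nat.choose (p*n) (q*n) := by rw [hrw]; ring
      _ < _ := hlt
  -- second conjunct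
  have second : (Nat.choose (p * n) (q * n) : ℝ) <
      ((p : ℝ) / (q : ℝ)) ^ (q * n) * ((p : ℝ) / ((p : ℝ) - (q : ℝ))) ^ ((p - q) * n) := by
    have h1 : (Nat.choose (p*n) (q*n) : ℝ) * ((q:ℝ) ^ (q*n) * ((p:ℝ)-(q:ℝ)) ^ ((p-q)*n))
        < (p:ℝ) ^ (p*n) := by
      have h0 : ((Nat.choose (p*n) (q*n) * (q ^ (q*n) * (p-q) ^ ((p-q)*n)) : ℕ) : ℝ)
          < ((p ^ (p*n) : ℕ) : ℝ) := by exact_mod_cast key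
      push_cast [Nat.cast_sub hpq.le] at h0
      convert h0 using 2
    rw [div_pow, div_pow, div_mul_div_comm, lt_div_iff₀ (by positivity)]
    have hppow : (p:ℝ) ^ (q*n) * (p:ℝ) ^ ((p-q)*n) = (p:ℝ) ^ (p*n) := by
      rw [← pow_add, hsplit]
    nlinarith [h1]
  refine ⟨?_, second⟩
  -- first conjunct
  set R := ((p : ℝ) / (q : ℝ)) * (((p : ℝ) / ((p : ℝ) - (q : ℝ))) ^ (((p : ℝ) - (q : ℝ)) / (q : ℝ))) with hR
  have hRpos : 0 < R := by
    apply mul_pos (by positivity)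
    exact Real.rpow_pos_of_pos (by positivity) _
  have hRpow : R ^ (((q:ℝ) * n)) = ((p : ℝ) / (q : ℝ)) ^ (q * n) * ((p : ℝ) / ((p : ℝ) - (q : ℝ))) ^ ((p - q) * n) := by
    rw [hR, Real.mul_rpow (by positivity) (by positivity),
        ← Real.rpow_natCast ((p:ℝ)/q) (q*n), ← Real.rpow_natCast ((p:ℝ)/((p:ℝ)-q)) ((p-q)*n),
        ← Real.rpow_mul (by positivity)]
    congr 1
    · push_cast; ring
    · congr 1
      have hc : ((p - q : ℕ) : ℝ) = (p:ℝ) - q := by exact_mod_cast Nat.cast_sub hpq.le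
      field_simp
      push_cast [hc]
      ring
  have hlt : (Nat.choose (p * n) (q * n) : ℝ) < R ^ ((q:ℝ) * n) := by
    rw [hRpow]; exact second
  have := Real.rpow_lt_rpow (by positivity) hlt (by positivity : (0:ℝ) < 1 / ((q:ℝ)*n))
  rwa [← Real.rpow_mul hRpos.le, mul_one_div, div_self (by positivity), Real.rpow_one] at this
end

section
/- For all positive integers n, m, k₁, k₂, the dual cone of the cone of sums of squares biforms with respect to the apolar inner product is contained in the cone of sums of squares biforms: {f ∈ ℝ[x,y]_{2k₁,2k₂} : ⟨f, g⟩_d ≥ 0 for all g ∈ Sq^{(n,m)}_{(2k₁,2k₂)}} ⊆ Sq^{(n,m)}_{(2k₁,2k₂)}. -/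
set_option maxHeartbeats 1000000


open MeasureTheory MvPolynomial

noncomputable section

namespace BiformPaper

/-- The weight function on the variables: the `x`-variables get weight `(1,0)` and the
`y`-variables get weight `(0,1)`. -/
def bw (n m : ℕ) : Fin n ⊕ Fin m → ℕ × ℕ := Sum.elim (fun _ => (1, 0)) (fun _ => (0, 1))

/-- The set of biforms of bidegree `(k₁, k₂)`: real polynomials in
`x = (x₁, …, xₙ)` and `y = (y₁, …, y_m)`, homogeneous of degree `k₁` in `x` and of degree
`k₂` in `y`. -/
def Biform (n m k₁ k₂ : ℕ) : Set (MvPolynomial (Fin n ⊕ Fin m) ℝ) :=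
  {f | MvPolynomial.IsWeightedHomogeneous (bw n m) f (k₁, k₂)}

/-- Evaluation of a polynomial at a point `(x, y) ∈ ℝⁿ × ℝᵐ`. -/
def beval {n m : ℕ} (f : MvPolynomial (Fin n ⊕ Fin m) ℝ) (x : Fin n → ℝ) (y : Fin m → ℝ) : ℝ :=
  eval (Sum.elim x y) f

/-- The Euclidean unit sphere `S^{n-1}` in `ℝⁿ`. -/
def unitSphere (n : ℕ) : Set (Fin n → ℝ) := {x | ∑ i, x i ^ 2 = 1}

/-- `σ` is the normalized uniform measure on the unit sphere `S^{n-1} ⊆ ℝⁿ`, i.e., the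
unique rotation-invariant Borel probability measure concentrated on the sphere. -/
structure IsSphereMeasure (n : ℕ) (σ : Measure (Fin n → ℝ)) : Prop where
  prob : IsProbabilityMeasure σ
  onSphere : σ (unitSphere n)ᶜ = 0
  invariant : ∀ Q : Matrix (Fin n) (Fin n) ℝ, Q * Q.transpose = 1 → σ.map Q.mulVec = σ

/-- The average `∫_T f dσ` of `f` over `T = S^{n-1} × S^{m-1}` (with `σ` the product of the
normalized sphere measures `σ₁`, `σ₂`). -/
def bavg {n m : ℕ} (σ₁ : Measure (Fin n → ℝ)) (σ₂ : Measure (Fin m → ℝ))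
    (f : MvPolynomial (Fin n ⊕ Fin m) ℝ) : ℝ :=
  ∫ x, ∫ y, beval f x y ∂σ₂ ∂σ₁

/-- The `L²(σ)` inner product `⟨f, g⟩ = ∫_T f·g dσ` on biforms. -/
def bip {n m : ℕ} (σ₁ : Measure (Fin n → ℝ)) (σ₂ : Measure (Fin m → ℝ))
    (f g : MvPolynomial (Fin n ⊕ Fin m) ℝ) : ℝ :=
  ∫ x, ∫ y, beval f x y * beval g x y ∂σ₂ ∂σ₁

/-- The cone `Pos^{(n,m)}_{(2k₁,2k₂)}` of nonnegative biforms of bidegree `(2k₁, 2k₂)`. -/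
def PosSet (n m k₁ k₂ : ℕ) : Set (MvPolynomial (Fin n ⊕ Fin m) ℝ) :=
  {f | f ∈ Biform n m (2 * k₁) (2 * k₂) ∧ ∀ x y, 0 ≤ beval f x y}

/-- The cone `Sq^{(n,m)}_{(2k₁,2k₂)}` of finite sums of squares of biforms of bidegree
`(k₁, k₂)`. -/
def SqSet (n m k₁ k₂ : ℕ) : Set (MvPolynomial (Fin n ⊕ Fin m) ℝ) :=
  {f | ∃ (N : ℕ) (g : Fin N → MvPolynomial (Fin n ⊕ Fin m) ℝ),
      (∀ i, g i ∈ Biform n m k₁ k₂) ∧ f = ∑ i, g i ^ 2}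

/-- The cone `Lf^{(n,m)}_{(2k₁,2k₂)}` of finite sums of products
`ℓᵢ(x)^{2k₁} · ℓ′ᵢ(y)^{2k₂}` of even powers of linear forms. -/
def LfSet (n m k₁ k₂ : ℕ) : Set (MvPolynomial (Fin n ⊕ Fin m) ℝ) :=
  {f | ∃ (N : ℕ) (a : Fin N → Fin n → ℝ) (b : Fin N → Fin m → ℝ),
      f = ∑ r, (∑ i, C (a r i) * X (Sum.inl i)) ^ (2 * k₁) *
               (∑ j, C (b r j) * X (Sum.inr j)) ^ (2 * k₂)}

/-- The biform `q = (x₁² + ⋯ + xₙ²)^{k₁} · (y₁² + ⋯ + y_m²)^{k₂}`. -/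
def qpoly (n m k₁ k₂ : ℕ) : MvPolynomial (Fin n ⊕ Fin m) ℝ :=
  (∑ i : Fin n, X (Sum.inl i) ^ 2) ^ k₁ * (∑ j : Fin m, X (Sum.inr j) ^ 2) ^ k₂

/-- The hyperplane `𝓜` of biforms of bidegree `(2k₁, 2k₂)` with average `0` on `T`. -/
def MSet (n m k₁ k₂ : ℕ) (σ₁ : Measure (Fin n → ℝ)) (σ₂ : Measure (Fin m → ℝ)) :
    Set (MvPolynomial (Fin n ⊕ Fin m) ℝ) :=
  {f | f ∈ Biform n m (2 * k₁) (2 * k₂) ∧ bavg σ₁ σ₂ f = 0}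

/-- The translated section `K̃ = {f ∈ 𝓜 : f + q ∈ K}` of a cone `K`. -/
def tilde (n m k₁ k₂ : ℕ) (σ₁ : Measure (Fin n → ℝ)) (σ₂ : Measure (Fin m → ℝ))
    (K : Set (MvPolynomial (Fin n ⊕ Fin m) ℝ)) : Set (MvPolynomial (Fin n ⊕ Fin m) ℝ) :=
  {f | f ∈ MSet n m k₁ k₂ σ₁ σ₂ ∧ f + qpoly n m k₁ k₂ ∈ K}

/-- The unit ball `B_𝓜` of `𝓜` in the `L²(σ)` norm. -/
def bball (n m k₁ k₂ : ℕ) (σ₁ : Measure (Fin n → ℝ)) (σ₂ : Measure (Fin m → ℝ)) :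
    Set (MvPolynomial (Fin n ⊕ Fin m) ℝ) :=
  {f | f ∈ MSet n m k₁ k₂ σ₁ σ₂ ∧ bip σ₁ σ₂ f f ≤ 1}

/-- `ψ : ℝ^D → Mset` is a unitary isomorphism: an injective linear map with range `Mset`
carrying the standard inner product of `ℝ^D` to the `L²(σ)` inner product.  Volumes of
Borel subsets `E` of `Mset` are computed as the Lebesgue measure of `ψ ⁻¹' E`
(by Lemma 1.1 of the paper this does not depend on the choice of `ψ`). -/
structure IsUnitaryParam (n m D : ℕ) (σ₁ : Measure (Fin n → ℝ)) (σ₂ : Measure (Fin m → ℝ))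
    (Mset : Set (MvPolynomial (Fin n ⊕ Fin m) ℝ))
    (ψ : (Fin D → ℝ) →ₗ[ℝ] MvPolynomial (Fin n ⊕ Fin m) ℝ) : Prop where
  inj : Function.Injective ψ
  range : Set.range ψ = Mset
  ip : ∀ a b : Fin D → ℝ, bip σ₁ σ₂ (ψ a) (ψ b) = ∑ i, a i * b i

/-- The apolar inner product `⟨r, s⟩_d = D_r(s)` on biforms, where `D_r` is the
differential operator obtained from `r` by replacing each variable by the corresponding
partial derivative; its value on a pair of forms of the same bidegree is
`∑_α r_α · s_α · α!`. -/
def apolar {n m : ℕ} (r s : MvPolynomial (Fin n ⊕ Fin m) ℝ) : ℝ :=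
  ∑ α ∈ r.support, coeff α r * coeff α s * α.prod fun _ k => (k.factorial : ℝ)

end BiformPaper


namespace SOSAux

open BiformPaper
open Finset Finsupp

lemma vander1 {ι : Type*} [DecidableEq ι] (γ : ι → ℕ) (s : Finset ι) (k : ℕ) :
    ∑ a ∈ Finset.finsuppAntidiag s k, ∏ v ∈ s, (γ v).choose (a v) =
      (∑ v ∈ s, γ v).choose k := by
  induction s using Finset.induction_on generalizing k with
  | empty =>
    rw [Finset.finsuppAntidiag_empty]
    rcases Nat.eq_zero_or_pos k with rfl | hk
    · simp
    · rw [if_neg hk.ne', Finset.sum_empty, Finset.sum_empty,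
        Nat.choose_eq_zero_of_lt hk]
  | @insert a s ha ih =>
    rw [Finset.finsuppAntidiag_insert ha, Finset.sum_biUnion, Finset.sum_insert ha,
      Nat.add_choose_eq]
    · apply Finset.sum_congr rfl
      simp only [Finset.HasAntidiagonal.mem_antidiagonal, sum_map, Function.Embedding.coeFn_mk, Prod.forall]
      rintro u v rfl
      rw [← ih v, Finset.mul_sum, ← Finset.sum_attach (Finset.finsuppAntidiag s v)]
      apply Finset.sum_congr rfl
      rintro ⟨x, hx⟩ -
      rw [Finset.prod_insert ha]
      congr 1
      · show (γ a).choose ((x.update a u) a) = (γ a).choose u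
        simp [Finsupp.coe_update]
      · apply Finset.prod_congr rfl
        intro i hi
        congr 1
        simp only [Finsupp.coe_update]
        show (x.update a u) i = x i
        rw [Finsupp.coe_update, Function.update_of_ne (ne_of_mem_of_not_mem hi ha)]
    · simp only [Set.PairwiseDisjoint, Set.Pairwise, mem_coe, Finset.HasAntidiagonal.mem_antidiagonal, ne_eq,
        disjoint_left, mem_map, mem_attach, Function.Embedding.coeFn_mk, true_and, Subtype.exists,
        exists_prop, not_exists, not_and, forall_exists_index, and_imp, forall_apply_eq_imp_iff₂,
        Prod.forall, Prod.mk.injEq]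
      rintro u v rfl u' v' huv h _ g _ rfl l _ hgl
      obtain rfl : u' = u := by
        have hh : (l.update a u') a = (g.update a u) a := DFunLike.congr_fun hgl a
        simpa only [Finsupp.coe_update, Function.update_self] using hh
      simp only [add_right_inj] at huv
      exact h rfl huv.symm

variable (n m k₁ k₂ : ℕ)

/-- The finset of exponent vectors of bidegree `(k₁, k₂)`. -/
def VS : Finset ((Fin n ⊕ Fin m) →₀ ℕ) :=
  (((Finset.univ : Finset (Fin n)).finsuppAntidiag k₁) ×ˢ
      ((Finset.univ : Finset (Fin m)).finsuppAntidiag k₂)).map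
    (Finsupp.sumFinsuppEquivProdFinsupp.symm.toEmbedding)

lemma weight_bw (δ : Fin n ⊕ Fin m →₀ ℕ) :
    Finsupp.weight (bw n m) δ = (∑ i, δ (Sum.inl i), ∑ j, δ (Sum.inr j)) := by
  rw [Finsupp.weight_apply, Finsupp.sum_fintype _ _ (fun v => by simp)]
  rw [Fintype.sum_sum_type]
  apply Prod.ext
  · simp [Prod.fst_sum, bw]
  · simp [Prod.snd_sum, bw]

lemma mem_VS {α : (Fin n ⊕ Fin m) →₀ ℕ} :
    α ∈ VS n m k₁ k₂ ↔ Finsupp.weight (bw n m) α = (k₁, k₂) := by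
  rw [VS, Finset.mem_map_equiv, Finset.mem_product, Finset.mem_finsuppAntidiag,
    Finset.mem_finsuppAntidiag, weight_bw, Prod.mk.injEq]
  simp only [Equiv.symm_symm, Finset.subset_univ, and_true]
  simp [Finsupp.fst_sumFinsuppEquivProdFinsupp, Finsupp.snd_sumFinsuppEquivProdFinsupp]


/-- Product of binomial coefficients, as a real number. -/
def CPr {ι : Type*} [Fintype ι] (γ α : ι →₀ ℕ) : ℝ := ∏ v, ((γ v).choose (α v) : ℝ)

/-- Product of factorials, as a real number. -/
def Frr {ι : Type*} [Fintype ι] (δ : ι →₀ ℕ) : ℝ := ∏ v, ((δ v).factorial : ℝ)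

lemma vander2 (γ : Fin n ⊕ Fin m →₀ ℕ)
    (hγ : Finsupp.weight (bw n m) γ = (2*k₁, 2*k₂)) :
    ∑ α ∈ VS n m k₁ k₂, CPr γ α = ((2*k₁).choose k₁ : ℝ) * ((2*k₂).choose k₂ : ℝ) := by
  rw [weight_bw, Prod.mk.injEq] at hγ
  have hnat : ∑ α ∈ VS n m k₁ k₂, ∏ v, (γ v).choose (α v) =
      (2*k₁).choose k₁ * (2*k₂).choose k₂ := by
    rw [VS, Finset.sum_map]
    have hsummand : ∀ p : (Fin n →₀ ℕ) × (Fin m →₀ ℕ),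
        (∏ v, (γ v).choose ((Finsupp.sumFinsuppEquivProdFinsupp.symm.toEmbedding p) v)) =
        (∏ i, (γ (Sum.inl i)).choose (p.1 i)) * ∏ j, (γ (Sum.inr j)).choose (p.2 j) := by
      intro p
      rw [Fintype.prod_sum_type]
      simp [Finsupp.sumFinsuppEquivProdFinsupp_symm_inl,
        Finsupp.sumFinsuppEquivProdFinsupp_symm_inr]
    rw [Finset.sum_congr rfl (fun p _ => hsummand p), Finset.sum_product]
    dsimp only
    rw [← Finset.sum_mul_sum]
    rw [vander1 (fun i => γ (Sum.inl i)) Finset.univ k₁,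
      vander1 (fun j => γ (Sum.inr j)) Finset.univ k₂, hγ.1, hγ.2]
  calc ∑ α ∈ VS n m k₁ k₂, CPr γ α
      = ((∑ α ∈ VS n m k₁ k₂, ∏ v, (γ v).choose (α v) : ℕ) : ℝ) := by
        rw [Nat.cast_sum]
        exact Finset.sum_congr rfl fun α _ => by rw [CPr, Nat.cast_prod]
    _ = _ := by rw [hnat]; push_cast; ring

end SOSAux

namespace SOSAux

open Finset BiformPaper

lemma Frr_pos {ι : Type*} [Fintype ι] (δ : ι →₀ ℕ) : 0 < Frr δ :=
  Finset.prod_pos fun v _ => by exact_mod_cast (δ v).factorial_pos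

lemma Frr_mul {ι : Type*} [Fintype ι] (α β : ι →₀ ℕ) :
    Frr (α + β) = CPr (α + β) α * Frr α * Frr β := by
  rw [CPr, Frr, Frr, Frr, ← Finset.prod_mul_distrib, ← Finset.prod_mul_distrib]
  refine Finset.prod_congr rfl fun v _ => ?_
  simp only [Finsupp.add_apply]
  have h := Nat.add_choose_mul_factorial_mul_factorial (α v) (β v)
  rw [← Nat.choose_symm_add] at h
  exact_mod_cast h.symm

lemma apolar_sum {n m : ℕ} {κ : Type*} (f : MvPolynomial (Fin n ⊕ Fin m) ℝ)
    (t : Finset κ) (g : κ → MvPolynomial (Fin n ⊕ Fin m) ℝ) :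
    apolar f (∑ i ∈ t, g i) = ∑ i ∈ t, apolar f (g i) := by
  unfold BiformPaper.apolar
  simp only [MvPolynomial.coeff_sum, Finset.mul_sum, Finset.sum_mul]
  exact Finset.sum_comm

lemma apolar_monomial {n m : ℕ} (f : MvPolynomial (Fin n ⊕ Fin m) ℝ)
    (δ : (Fin n ⊕ Fin m) →₀ ℕ) (t : ℝ) :
    apolar f (monomial δ t) = coeff δ f * t * Frr δ := by
  unfold BiformPaper.apolar
  rw [Finset.sum_eq_single δ]
  · rw [MvPolynomial.coeff_monomial, if_pos rfl, Frr,
      Finsupp.prod_fintype _ _ (fun v => by simp)]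
  · intro γ _ hne
    rw [MvPolynomial.coeff_monomial, if_neg (fun h => hne h.symm), mul_zero, zero_mul]
  · intro hδ
    rw [MvPolynomial.notMem_support_iff.mp hδ]
    ring

end SOSAux

open SOSAux in
open BiformPaper in
/-- **Lemma (the apolar dual of the sums of squares cone is contained in it).**
For all positive integers `n, m, k₁, k₂`:
`{f ∈ ℝ[x,y]_{2k₁,2k₂} : ⟨f, g⟩_d ≥ 0 for all g ∈ Sq} ⊆ Sq`. -/
theorem statement12 (n m k₁ k₂ : ℕ) (hn : 0 < n) (hm : 0 < m) (hk₁ : 0 < k₁) (hk₂ : 0 < k₂) :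
    {f | f ∈ Biform n m (2 * k₁) (2 * k₂) ∧ ∀ g ∈ SqSet n m k₁ k₂, 0 ≤ apolar f g} ⊆
      SqSet n m k₁ k₂ := by
  classical
  intro f hf
  obtain ⟨hfh, hdual⟩ := hf
  have hfh' : MvPolynomial.IsWeightedHomogeneous (bw n m) f (2 * k₁, 2 * k₂) := hfh
  set c : ℝ := ((2*k₁).choose k₁ : ℝ) * ((2*k₂).choose k₂ : ℝ) with hc
  have hcpos : 0 < c := by
    have h1 : 0 < (2*k₁).choose k₁ := Nat.choose_pos (by omega)
    have h2 : 0 < (2*k₂).choose k₂ := Nat.choose_pos (by omega)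
    positivity
  have hcne : c ≠ 0 := hcpos.ne'
  set M : Matrix {α // α ∈ VS n m k₁ k₂} {α // α ∈ VS n m k₁ k₂} ℝ :=
    fun α β => coeff ((α : (Fin n ⊕ Fin m) →₀ ℕ) + (β : (Fin n ⊕ Fin m) →₀ ℕ)) f *
      CPr ((α : (Fin n ⊕ Fin m) →₀ ℕ) + (β : (Fin n ⊕ Fin m) →₀ ℕ)) (α : (Fin n ⊕ Fin m) →₀ ℕ) / c
    with hM
  -- biforms from coefficient vectors
  have hbiform : ∀ y : {α // α ∈ VS n m k₁ k₂} → ℝ,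
      (∑ α : {α // α ∈ VS n m k₁ k₂}, (monomial (↑α : (Fin n ⊕ Fin m) →₀ ℕ) (y α)))
        ∈ Biform n m k₁ k₂ := by
    intro y
    intro d hd
    rw [MvPolynomial.coeff_sum] at hd
    obtain ⟨α, -, hα⟩ := Finset.exists_ne_zero_of_sum_ne_zero hd
    rw [MvPolynomial.coeff_monomial] at hα
    by_cases h : (↑α : (Fin n ⊕ Fin m) →₀ ℕ) = d
    · exact h ▸ (mem_VS n m k₁ k₂).mp α.2
    · exact absurd (if_neg h) hα
  -- value of the apolar form on products
  have hapolar : ∀ y : {α // α ∈ VS n m k₁ k₂} → ℝ,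
      apolar f ((∑ α : {α // α ∈ VS n m k₁ k₂}, monomial (↑α) (y α)) *
          (∑ β : {α // α ∈ VS n m k₁ k₂}, monomial (↑β) (y β)))
        = ∑ α : {α // α ∈ VS n m k₁ k₂}, ∑ β : {α // α ∈ VS n m k₁ k₂},
            coeff ((α : (Fin n ⊕ Fin m) →₀ ℕ) + (β : (Fin n ⊕ Fin m) →₀ ℕ)) f * (y α * y β) * Frr ((α : (Fin n ⊕ Fin m) →₀ ℕ) + (β : (Fin n ⊕ Fin m) →₀ ℕ)) := by
    intro y
    rw [Finset.sum_mul_sum, apolar_sum]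
    refine Finset.sum_congr rfl fun α _ => ?_
    rw [apolar_sum]
    refine Finset.sum_congr rfl fun β _ => ?_
    rw [MvPolynomial.monomial_mul, apolar_monomial]
  have hMpsd : M.PosSemidef := by
    rw [Matrix.posSemidef_iff_dotProduct_mulVec]
    constructor
    · ext α β
      simp only [Matrix.conjTranspose_apply, star_trivial]
      simp only [hM]
      rw [add_comm (β : (Fin n ⊕ Fin m) →₀ ℕ) (α : (Fin n ⊕ Fin m) →₀ ℕ)]
      congr 2
      rw [CPr, CPr]
      refine Finset.prod_congr rfl fun v _ => ?_
      congr 1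
      simp only [Finsupp.add_apply]
      exact Nat.choose_symm_add.symm
    · intro x
      simp only [star_trivial]
      have key : dotProduct x (M.mulVec x) =
          apolar f ((∑ α : {α // α ∈ VS n m k₁ k₂}, monomial (↑α) (x α / Frr (α : (Fin n ⊕ Fin m) →₀ ℕ))) *
            (∑ β : {α // α ∈ VS n m k₁ k₂}, monomial (↑β) (x β / Frr (β : (Fin n ⊕ Fin m) →₀ ℕ)))) / c := by
        rw [hapolar, Finset.sum_div]
        unfold dotProduct Matrix.mulVec
        refine Finset.sum_congr rfl fun α _ => ?_
        unfold dotProduct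
        rw [Finset.mul_sum, Finset.sum_div]
        refine Finset.sum_congr rfl fun β _ => ?_
        rw [Frr_mul]
        have h1 := (Frr_pos (α : (Fin n ⊕ Fin m) →₀ ℕ)).ne'
        have h2 := (Frr_pos (β : (Fin n ⊕ Fin m) →₀ ℕ)).ne'
        simp only [hM]
        field_simp [hM]
      rw [key]
      apply div_nonneg _ hcpos.le
      have hsq : (∑ α : {α // α ∈ VS n m k₁ k₂}, monomial (↑α) (x α / Frr (α : (Fin n ⊕ Fin m) →₀ ℕ))) *
          (∑ β : {α // α ∈ VS n m k₁ k₂}, monomial (↑β) (x β / Frr (β : (Fin n ⊕ Fin m) →₀ ℕ))) ∈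
            SqSet n m k₁ k₂ := by
        refine ⟨1, fun _ => ∑ α : {α // α ∈ VS n m k₁ k₂}, monomial (↑α) (x α / Frr (α : (Fin n ⊕ Fin m) →₀ ℕ)),
          fun _ => hbiform _, ?_⟩
        rw [Finset.sum_const, Finset.card_univ, Fintype.card_fin, one_smul, sq]
      exact hdual _ hsq
  obtain ⟨B, hB⟩ : ∃ B : Matrix {α // α ∈ VS n m k₁ k₂} {α // α ∈ VS n m k₁ k₂} ℝ,
      M = B.conjTranspose * B := by
    open MatrixOrder in
    exact ⟨CFC.sqrt M, by rw [← Matrix.star_eq_conjTranspose,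
      (CFC.sqrt_nonneg M).isSelfAdjoint.star_eq, CFC.sqrt_mul_sqrt_self M hMpsd.nonneg]⟩
  set G : {α // α ∈ VS n m k₁ k₂} → MvPolynomial (Fin n ⊕ Fin m) ℝ :=
    fun e => ∑ α : {α // α ∈ VS n m k₁ k₂}, monomial (↑α) (B e α) with hG
  refine ⟨Fintype.card {α // α ∈ VS n m k₁ k₂},
    fun i => G ((Fintype.equivFin _).symm i), fun i => hbiform _, ?_⟩
  rw [Equiv.sum_comp (Fintype.equivFin {α // α ∈ VS n m k₁ k₂}).symm (fun e => (G e)^2)]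
  -- now prove f = ∑ e, (G e)^2 coefficientwise
  apply MvPolynomial.ext
  intro γ
  have hexp : coeff γ (∑ e : {α // α ∈ VS n m k₁ k₂}, (G e)^2) =
      ∑ α : {α // α ∈ VS n m k₁ k₂}, ∑ β : {α // α ∈ VS n m k₁ k₂},
        (if (α : (Fin n ⊕ Fin m) →₀ ℕ) + (β : (Fin n ⊕ Fin m) →₀ ℕ) = γ then M α β else 0) := by
    have step1 : ∀ e, coeff γ ((G e)^2) =
        ∑ α : {α // α ∈ VS n m k₁ k₂}, ∑ β : {α // α ∈ VS n m k₁ k₂},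
          (if (α : (Fin n ⊕ Fin m) →₀ ℕ) + (β : (Fin n ⊕ Fin m) →₀ ℕ) = γ then B e α * B e β else 0) := by
      intro e
      rw [sq, hG, Finset.sum_mul_sum]
      rw [MvPolynomial.coeff_sum]
      refine Finset.sum_congr rfl fun α _ => ?_
      rw [MvPolynomial.coeff_sum]
      refine Finset.sum_congr rfl fun β _ => ?_
      rw [MvPolynomial.monomial_mul, MvPolynomial.coeff_monomial]
    rw [MvPolynomial.coeff_sum, Finset.sum_congr rfl (fun e _ => step1 e)]
    rw [Finset.sum_comm]
    refine Finset.sum_congr rfl fun α _ => ?_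
    rw [Finset.sum_comm]
    refine Finset.sum_congr rfl fun β _ => ?_
    split_ifs with h
    · rw [hB, Matrix.mul_apply]
      exact Finset.sum_congr rfl fun e _ => by
        simp [Matrix.conjTranspose_apply]
    · exact Finset.sum_const_zero
  rw [hexp]
  by_cases hγ : Finsupp.weight (bw n m) γ = (2*k₁, 2*k₂)
  · -- homogeneous case
    have hMval : ∀ (α β : {α // α ∈ VS n m k₁ k₂}),
        (if (α : (Fin n ⊕ Fin m) →₀ ℕ) + (β : (Fin n ⊕ Fin m) →₀ ℕ) = γ then M α β else 0) =
        (coeff γ f / c) * (if (α : (Fin n ⊕ Fin m) →₀ ℕ) + (β : (Fin n ⊕ Fin m) →₀ ℕ) = γ then CPr γ ↑α else 0) := by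
      intro α β
      split_ifs with h
      · rw [hM]; dsimp only; rw [h]; ring
      · rw [mul_zero]
    simp only [hMval]
    simp only [← Finset.mul_sum]
    have hinner : ∀ α : {α // α ∈ VS n m k₁ k₂},
        (∑ β : {α // α ∈ VS n m k₁ k₂},
          if (α : (Fin n ⊕ Fin m) →₀ ℕ) + (β : (Fin n ⊕ Fin m) →₀ ℕ) = γ then CPr γ ↑α else 0) = CPr γ ↑α := by
      intro α
      by_cases hle : (↑α : (Fin n ⊕ Fin m) →₀ ℕ) ≤ γ
      · have hadd : (α : (Fin n ⊕ Fin m) →₀ ℕ) + (γ - (α : (Fin n ⊕ Fin m) →₀ ℕ)) = γ := add_tsub_cancel_of_le hle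
        have hmem : γ - (α : (Fin n ⊕ Fin m) →₀ ℕ) ∈ VS n m k₁ k₂ := by
          rw [mem_VS]
          have h2 := congrArg (Finsupp.weight (bw n m)) hadd
          rw [map_add, (mem_VS n m k₁ k₂).mp α.2, hγ] at h2
          have := h2
          rw [Prod.ext_iff] at this ⊢
          simp only [Prod.fst_add, Prod.snd_add] at this
          omega
        rw [Finset.sum_eq_single (⟨γ - ↑α, hmem⟩ : {α // α ∈ VS n m k₁ k₂})]
        · rw [if_pos hadd]
        · intro β _ hne
          rw [if_neg]
          intro hcon
          exact hne (Subtype.ext (by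
            have : (β : (Fin n ⊕ Fin m) →₀ ℕ) = γ - (α : (Fin n ⊕ Fin m) →₀ ℕ) :=
              eq_tsub_of_add_eq (by rw [add_comm]; exact hcon)
            exact this))
        · intro habs
          exact absurd (Finset.mem_univ _) habs
      · have hzero : CPr γ (α : (Fin n ⊕ Fin m) →₀ ℕ) = 0 := by
          rw [Finsupp.le_def] at hle
          push_neg at hle
          obtain ⟨v, hv⟩ := hle
          exact Finset.prod_eq_zero (Finset.mem_univ v)
            (by rw [Nat.choose_eq_zero_of_lt hv, Nat.cast_zero])
        simp [hzero]
    rw [Finset.sum_congr rfl (fun α _ => hinner α)]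
    rw [Finset.sum_coe_sort (VS n m k₁ k₂) (fun α => CPr γ α), vander2 n m k₁ k₂ γ hγ]
    rw [← hc]
    field_simp
  · -- inhomogeneous case: both sides vanish
    have hcoeff0 : coeff γ f = 0 := by
      by_contra hne
      exact hγ (hfh' hne)
    rw [hcoeff0]
    symm
    apply Finset.sum_eq_zero
    intro α _
    apply Finset.sum_eq_zero
    intro β _
    rw [if_neg]
    intro hcon
    apply hγ
    have h2 := congrArg (Finsupp.weight (bw n m)) hcon
    rw [map_add, (mem_VS n m k₁ k₂).mp α.2, (mem_VS n m k₁ k₂).mp β.2] at h2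
    rw [← h2, Prod.ext_iff]
    simp only [Prod.fst_add, Prod.snd_add]
    omega
end
end
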